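/- arXiv:2109.14488 — 5 statements merged into one kernel-verified Lean document; each statement's English description precedes it below -/
import Mathlib

section
/- Let G be a digraph with excess one, i.e. a k-geodetic digraph of minimum out-degree d and order M(d,k)+1, with outlier function o assigning to each vertex u the unique vertex o(u) with d(u,o(u)) ≥ k+1. If u and v are distinct vertices with N^+(u) = N^+(v), then o(u) = v and o(v) = u. -/
/-- `IsWalk A w` means the nonempty list `w` of vertices is a directed walk
in the digraph with adjacency relation `A`. -/
def IsWalk {V : Type*} (A : V → V → Prop) : List V → Prop
  | [] => False
  | [_] => True
  | a :: b :: l => A a b ∧ IsWalk A (b :: l)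

/-- `WalkFrom A u v w` means `w` is a directed walk from `u` to `v`.
A walk represented by a list of length `n+1` has length `n` as a walk. -/
def WalkFrom {V : Type*} (A : V → V → Prop) (u v : V) (w : List V) : Prop :=
  IsWalk A w ∧ w.head? = some u ∧ w.getLast? = some v

/-- A digraph is `k`-geodetic if for any (not necessarily distinct) vertices
`u, v` there is at most one directed walk from `u` to `v` of length `≤ k`. -/
def KGeodetic {V : Type*} (A : V → V → Prop) (k : ℕ) : Prop :=
  ∀ u v : V, ∀ w₁ w₂ : List V, WalkFrom A u v w₁ → WalkFrom A u v w₂ →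
    w₁.length ≤ k + 1 → w₂.length ≤ k + 1 → w₁ = w₂

/-- `ReachIn A k u v` means there is a directed walk from `u` to `v` of
length at most `k`. -/
def ReachIn {V : Type*} (A : V → V → Prop) (k : ℕ) (u v : V) : Prop :=
  ∃ w : List V, WalkFrom A u v w ∧ w.length ≤ k + 1

/-- The directed Moore bound `M(d,k) = 1 + d + d^2 + ... + d^k`. -/
def mooreBound (d k : ℕ) : ℕ := ∑ i ∈ Finset.range (k + 1), d ^ i

/-- `o` is the outlier function of a `k`-geodetic digraph with excess one:
for each vertex `u`, `o u` is the unique vertex not reachable from `u` by a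
walk of length at most `k`. -/
def IsOutlierFn {V : Type*} (A : V → V → Prop) (k : ℕ) (o : V → V) : Prop :=
  ∀ u v : V, ¬ ReachIn A k u v ↔ v = o u


lemma key_unreach {V : Type*} (A : V → V → Prop) (k : ℕ)
    (hgeo : KGeodetic A k) (u v : V) (huv : u ≠ v)
    (hN : {w : V | A u w} = {w : V | A v w}) : ¬ ReachIn A k u v := by
  rintro ⟨w, ⟨hw, hh, hl⟩, hlen⟩
  match w with
  | [] => simp at hh
  | [a] =>
    simp only [List.head?_cons, Option.some.injEq] at hh
    simp only [List.getLast?_singleton, Option.some.injEq] at hl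
    exact huv (hh ▸ hl)
  | a :: b :: rest =>
    simp only [List.head?_cons, Option.some.injEq] at hh
    obtain ⟨hab, hrest⟩ := hw
    have hvb : A v b := by
      have : b ∈ {w : V | A u w} := hh ▸ hab
      rw [hN] at this; exact this
    have h1 : WalkFrom A v v [v] := by
      refine ⟨trivial, rfl, rfl⟩
    have h2 : WalkFrom A v v (v :: b :: rest) := by
      refine ⟨⟨hvb, hrest⟩, rfl, ?_⟩
      simpa using hl
    have := hgeo v v [v] (v :: b :: rest) h1 h2 (by simp) (by simpa using hlen)
    simp at this

/-- In a `(d,k;+1)`-digraph, two distinct vertices with the same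
out-neighbourhood are outliers of each other. -/
theorem stmt_7 {V : Type*} [Fintype V] (A : V → V → Prop) (d k : ℕ)
    (hd : 2 ≤ d) (hk : 2 ≤ k)
    (hgeo : KGeodetic A k)
    (hdeg : ∀ u : V, d ≤ Set.ncard {w : V | A u w})
    (hcard : Fintype.card V = mooreBound d k + 1)
    (o : V → V) (ho : IsOutlierFn A k o)
    (u v : V) (huv : u ≠ v)
    (hN : {w : V | A u w} = {w : V | A v w}) :
    o u = v ∧ o v = u := by
  constructor
  · exact ((ho u v).mp (key_unreach A k hgeo u v huv hN)).symm
  · exact ((ho v u).mp (key_unreach A k hgeo v u huv.symm hN.symm)).symm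
end

section
/- Let G be a (d,k;+1)-digraph whose outlier function o is an automorphism, and suppose u is a vertex with an arc from o(u) to u (a Type II vertex). Then u has exactly one out-neighbour u' with an arc from o(u') to u', namely u' = o^{-1}(u). -/
/-- In a `(d,k;+1)`-digraph whose outlier function `o` is an automorphism, a
Type II vertex `u` (one with an arc `o(u) → u`) has a unique Type II
out-neighbour, namely `o⁻¹(u)`. -/
theorem stmt_8 {V : Type*} [Fintype V] (A : V → V → Prop) (d k : ℕ)
    (hd : 2 ≤ d) (hk : 2 ≤ k)
    (hgeo : KGeodetic A k)
    (hdeg : ∀ u : V, d ≤ Set.ncard {w : V | A u w})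
    (hcard : Fintype.card V = mooreBound d k + 1)
    (o : V ≃ V) (ho : IsOutlierFn A k o)
    (hhom : ∀ a b : V, A a b ↔ A (o a) (o b))
    (u : V) (hII : A (o u) u) :
    ∀ u' : V, (A u u' ∧ A (o u') u') ↔ u' = o.symm u := by
  intro u'
  constructor
  · rintro ⟨h1, h2⟩
    -- two walks of length 2 from o u to u'
    have h3 : A (o u) (o u') := (hhom u u').mp h1
    have w1 : WalkFrom A (o u) u' [o u, u, u'] := by
      refine ⟨⟨hII, h1, trivial⟩, rfl, rfl⟩
    have w2 : WalkFrom A (o u) u' [o u, o u', u'] := by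
      refine ⟨⟨h3, h2, trivial⟩, rfl, rfl⟩
    have hlen : (3 : ℕ) ≤ k + 1 := by omega
    have := hgeo (o u) u' _ _ w1 w2 hlen hlen
    have hu : u = o u' := by
      have := congrArg (fun l : List V => l[1]?) this
      simpa using this
    have : o.symm (o u') = o.symm u := congrArg o.symm hu.symm
    simpa using this
  · rintro rfl
    have h1 : A u (o.symm u) := by
      have := (hhom u (o.symm u)).mpr
      simp at this
      exact this hII
    exact ⟨h1, by simpa using h1⟩
end

section
/- A vertex-transitive (d,k;+1)-digraph contains no Type II vertex: if G is vertex-transitive then for no vertex u is there an arc from o(u) to u. -/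
lemma isWalk_map' {V : Type*} {A B : V → V → Prop} (φ : V → V)
    (hφ : ∀ a b, A a b → B (φ a) (φ b)) :
    ∀ w : List V, IsWalk A w → IsWalk B (w.map φ)
  | [], h => h.elim
  | [_], _ => trivial
  | a :: b :: l, h => ⟨hφ _ _ h.1, isWalk_map' φ hφ (b :: l) h.2⟩

lemma reachIn_map' {V : Type*} {A : V → V → Prop} {k : ℕ} (φ : V → V)
    (hφ : ∀ a b, A a b → A (φ a) (φ b)) {u v : V} (h : ReachIn A k u v) :
    ReachIn A k (φ u) (φ v) := by
  obtain ⟨w, ⟨hw, hh, hl⟩, hlen⟩ := h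
  refine ⟨w.map φ, ⟨isWalk_map' φ hφ w hw, ?_, ?_⟩, by simpa using hlen⟩
  · rw [List.head?_map, hh]; rfl
  · rw [List.getLast?_map, hl]; rfl

/-- A vertex-transitive `(d,k;+1)`-digraph contains no Type II vertex: for no
vertex `u` is there an arc from `o(u)` to `u`. -/
theorem stmt_9 {V : Type*} [Fintype V] (A : V → V → Prop) (d k : ℕ)
    (hd : 2 ≤ d) (hk : 2 ≤ k)
    (hgeo : KGeodetic A k)
    (hdeg : ∀ u : V, d ≤ Set.ncard {w : V | A u w})
    (hcard : Fintype.card V = mooreBound d k + 1)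
    (o : V ≃ V) (ho : IsOutlierFn A k o)
    (hhom : ∀ a b : V, A a b ↔ A (o a) (o b))
    (hvt : ∀ u v : V, ∃ φ : V ≃ V, (∀ a b : V, A a b ↔ A (φ a) (φ b)) ∧ φ u = v) :
    ∀ u : V, ¬ A (o u) u := by
  intro u hu
  -- every vertex is Type II, by vertex-transitivity
  have typeII : ∀ v : V, A (o v) v := by
    intro v
    obtain ⟨φ, hφ, hφu⟩ := hvt u v
    have h1 : ¬ ReachIn A k u (o u) := (ho u (o u)).mpr rfl
    have h2 : ¬ ReachIn A k (φ u) (φ (o u)) := by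
      intro h
      apply h1
      have := reachIn_map' (φ.symm : V → V)
        (fun a b hab => (hφ (φ.symm a) (φ.symm b)).mpr (by simpa using hab)) h
      simpa using this
    have hoc : φ (o u) = o (φ u) := (ho (φ u) (φ (o u))).mp h2
    have : A (φ (o u)) (φ u) := (hφ _ _).mp hu
    rw [hoc, hφu] at this
    exact this
  -- any out-neighbour w of u satisfies u = o w, by k-geodecity
  have key : ∀ w : V, A u w → u = o w := by
    intro w huw
    have h1 : A (o u) (o w) := (hhom u w).mp huw
    have h2 : A (o w) w := typeII w
    have w1 : WalkFrom A (o u) w [o u, u, w] := ⟨⟨hu, huw, trivial⟩, rfl, rfl⟩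
    have w2 : WalkFrom A (o u) w [o u, o w, w] := ⟨⟨h1, h2, trivial⟩, rfl, rfl⟩
    have heq := hgeo (o u) w _ _ w1 w2 (by simp; omega) (by simp; omega)
    simp only [List.cons.injEq] at heq
    exact heq.2.1
  -- so u has at most one out-neighbour, contradicting d ≥ 2
  have hsub : {w : V | A u w} ⊆ {o.symm u} := by
    intro w hw
    have := key w hw
    simp only [Set.mem_singleton_iff, Equiv.eq_symm_apply]
    exact this.symm
  have hle : Set.ncard {w : V | A u w} ≤ 1 := by
    have := Set.ncard_le_ncard hsub (Set.finite_singleton _)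
    simpa using this
  have := hdeg u
  omega
end

section
/- If G is a vertex-transitive (d,k;+1)-digraph, then for 2 ≤ t ≤ k-1, (k+t) divides (M(d,k)+1)·(d^t − d^{t-1}). -/
namespace StmtEleven

variable {V : Type*} (A : V → V → Prop)

/-- function-based walk of length `m` from `u` to `v` -/
def Wk (f : ℕ → V) (m : ℕ) (u v : V) : Prop :=
  f 0 = u ∧ f m = v ∧ ∀ i < m, A (f i) (f (i + 1))

def toList (f : ℕ → V) (m : ℕ) : List V := (List.range (m + 1)).map f

lemma length_toList (f : ℕ → V) (m : ℕ) : (toList f m).length = m + 1 := by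
  simp [toList]

lemma isWalk_map_range' (f : ℕ → V) :
    ∀ (m s : ℕ), (∀ i, s ≤ i → i < s + m → A (f i) (f (i + 1))) →
      IsWalk A ((List.range' s (m + 1)).map f) := by
  intro m
  induction m with
  | zero => intro s _; simp [List.range']; trivial
  | succ m ih =>
      intro s h
      have : List.range' s (m + 1 + 1) = s :: List.range' (s + 1) (m + 1) := by
        simp [List.range']
      rw [this]
      have h2 : List.range' (s+1) (m + 1) = (s+1) :: List.range' (s + 2) m := by
        simp [List.range']
      have hw := ih (s + 1) (fun i h1 h2 => h i (by omega) (by omega))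
      rw [h2] at hw
      simp only [List.map_cons] at hw ⊢
      rw [h2]
      simp only [List.map_cons]
      exact ⟨h s le_rfl (by omega), hw⟩

lemma isWalk_toList (f : ℕ → V) (m : ℕ) (h : ∀ i < m, A (f i) (f (i + 1))) :
    IsWalk A (toList f m) := by
  have := isWalk_map_range' A f m 0 (fun i h1 h2 => h i (by omega))
  rwa [toList, List.range_eq_range']

lemma head?_toList (f : ℕ → V) (m : ℕ) : (toList f m).head? = some (f 0) := by
  simp [toList, List.range_succ_eq_map]

lemma getLast?_toList (f : ℕ → V) (m : ℕ) : (toList f m).getLast? = some (f m) := by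
  rw [toList, List.getLast?_eq_getElem?]
  simp

lemma walkFrom_toList {f : ℕ → V} {m : ℕ} {u v : V} (h : Wk A f m u v) :
    WalkFrom A u v (toList f m) := by
  obtain ⟨h0, hm, hadj⟩ := h
  exact ⟨isWalk_toList A f m hadj, by rw [head?_toList, h0], by rw [getLast?_toList, hm]⟩

lemma getElem_toList (f : ℕ → V) (m i : ℕ) (hi : i < m + 1) :
    (toList f m)[i]'(by simp [length_toList]; omega) = f i := by
  simp [toList]

end StmtEleven

namespace StmtEleven2
open StmtEleven

variable {V : Type*} {A : V → V → Prop} {k : ℕ}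

section Uniq

/-- two function-walks of length ≤ k with same endpoints give equal lists -/
lemma uniq_toList (hgeo : KGeodetic A k) {f g : ℕ → V} {a b : ℕ} {u v : V}
    (hf : Wk A f a u v) (hg : Wk A g b u v) (ha : a ≤ k) (hb : b ≤ k) :
    toList f a = toList g b :=
  hgeo u v _ _ (walkFrom_toList A hf) (walkFrom_toList A hg)
    (by rw [length_toList]; omega) (by rw [length_toList]; omega)

lemma uniq_len (hgeo : KGeodetic A k) {f g : ℕ → V} {a b : ℕ} {u v : V}
    (hf : Wk A f a u v) (hg : Wk A g b u v) (ha : a ≤ k) (hb : b ≤ k) :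
    a = b := by
  have := congrArg List.length (uniq_toList hgeo hf hg ha hb)
  rw [length_toList, length_toList] at this
  omega

lemma uniq_ext (hgeo : KGeodetic A k) {f g : ℕ → V} {a b : ℕ} {u v : V}
    (hf : Wk A f a u v) (hg : Wk A g b u v) (ha : a ≤ k) (hb : b ≤ k) :
    ∀ i ≤ a, f i = g i := by
  intro i hi
  have hab : a = b := uniq_len hgeo hf hg ha hb
  subst hab
  have h := uniq_toList hgeo hf hg ha hb
  have h1 : i < a + 1 := by omega
  calc f i = (toList f a)[i]'(by rw [length_toList]; omega) :=
        (getElem_toList f a i h1).symm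
    _ = (toList g a)[i]'(by rw [length_toList]; omega) := by
        congr 1
    _ = g i := getElem_toList g a i h1

/-- no closed walks of length between 1 and k -/
lemma no_short_closed (hgeo : KGeodetic A k) {f : ℕ → V} {m : ℕ} {u : V}
    (hf : Wk A f m u u) (h1 : 1 ≤ m) (h2 : m ≤ k) : False := by
  have hg : Wk A (fun _ => u) 0 u u := ⟨rfl, rfl, by omega⟩
  have := uniq_len hgeo hf hg h2 (by omega)
  omega

end Uniq

/-- list walk to function walk -/
lemma isWalk_adj {dflt : V} :
    ∀ (w : List V), IsWalk A w → ∀ i, i + 1 < w.length →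
      A (w.getD i dflt) (w.getD (i+1) dflt) := by
  intro w
  induction w with
  | nil => intro h; exact absurd h (by simp [IsWalk])
  | cons a l ih =>
      intro hw i hi
      match l, hw, hi with
      | b :: l', hw, hi =>
        obtain ⟨hab, hrest⟩ := hw
        match i with
        | 0 => simpa using hab
        | Nat.succ j =>
            have := ih hrest j (by simpa using hi)
            simpa using this

lemma walkFrom_to_Wk {w : List V} {u v : V} (h : WalkFrom A u v w) :
    Wk A (fun i => w.getD i u) (w.length - 1) u v := by
  obtain ⟨hw, hh, hl⟩ := h
  have hne : w ≠ [] := by rintro rfl; simp at hh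
  have hlen : 1 ≤ w.length := List.length_pos_iff.mpr hne
  refine ⟨?_, ?_, ?_⟩
  · have h2 := List.head?_eq_head hne
    rw [h2] at hh
    have h3 : w.head hne = u := by injection hh
    show w.getD 0 u = u
    rw [List.getD_eq_getElem?_getD, List.getElem?_eq_getElem (by omega)]
    simp [← h3, List.head_eq_getElem]
  · rw [List.getLast?_eq_getLast hne] at hl
    have h3 : w.getLast hne = v := by injection hl
    show w.getD (w.length - 1) u = v
    rw [List.getD_eq_getElem?_getD, List.getElem?_eq_getElem (by omega)]
    simp [← h3, List.getLast_eq_getElem]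
  · intro i hi
    exact isWalk_adj w hw i (by omega)

lemma reachIn_iff_wk {u v : V} :
    ReachIn A k u v ↔ ∃ m ≤ k, ∃ f, Wk A f m u v := by
  constructor
  · rintro ⟨w, hw, hlen⟩
    have h1 : 1 ≤ w.length := by
      rcases w with _ | _
      · exact absurd hw.1 (by simp [IsWalk])
      · simp
    exact ⟨w.length - 1, by omega, _, walkFrom_to_Wk hw⟩
  · rintro ⟨m, hm, f, hf⟩
    exact ⟨toList f m, walkFrom_toList A hf, by rw [length_toList]; omega⟩

end StmtEleven2

namespace StmtEleven3
open StmtEleven StmtEleven2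

variable {V : Type*} {A : V → V → Prop} {k : ℕ}

lemma wk_map {ψ : V → V} (hψ : ∀ a b : V, A a b → A (ψ a) (ψ b))
    {f : ℕ → V} {m : ℕ} {u v : V} (hf : Wk A f m u v) :
    Wk A (ψ ∘ f) m (ψ u) (ψ v) := by
  obtain ⟨h0, hm, hadj⟩ := hf
  exact ⟨by simp [h0], by simp [hm], fun i hi => hψ _ _ (hadj i hi)⟩

lemma reachIn_map {ψ : V → V} (hψ : ∀ a b : V, A a b → A (ψ a) (ψ b))
    {u v : V} (h : ReachIn A k u v) : ReachIn A k (ψ u) (ψ v) := by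
  rw [reachIn_iff_wk] at h ⊢
  obtain ⟨m, hm, f, hf⟩ := h
  exact ⟨m, hm, ψ ∘ f, wk_map hψ hf⟩

section WithO

variable {o : V ≃ V}

/-- automorphisms commute with the outlier map -/
lemma comm_o (ho : IsOutlierFn A k o)
    (ψ : V ≃ V) (hψ : ∀ a b : V, A a b ↔ A (ψ a) (ψ b)) (x : V) :
    o (ψ x) = ψ (o x) := by
  have h1 : ¬ ReachIn A k (ψ x) (ψ (o x)) := by
    intro h
    have h2 := reachIn_map (ψ := ψ.symm) (fun a b hab => by
      rw [hψ (ψ.symm a) (ψ.symm b)]; simpa using hab) h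
    simp only [Equiv.symm_apply_apply] at h2
    exact ((ho x (o x)).mpr rfl) h2
  exact ((ho (ψ x) (ψ (o x))).mp h1).symm

lemma comm_o_symm (ho : IsOutlierFn A k o)
    (ψ : V ≃ V) (hψ : ∀ a b : V, A a b ↔ A (ψ a) (ψ b)) (x : V) :
    o.symm (ψ x) = ψ (o.symm x) := by
  have := comm_o ho ψ hψ (o.symm x)
  rw [Equiv.apply_symm_apply] at this
  rw [← this, Equiv.symm_apply_apply]

lemma edge_o_symm (hhom : ∀ a b : V, A a b ↔ A (o a) (o b)) (a b : V) :
    A a b ↔ A (o.symm a) (o.symm b) := by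
  rw [hhom (o.symm a) (o.symm b), Equiv.apply_symm_apply, Equiv.apply_symm_apply]

/-- a vertex `v ≠ o u` is joined from `u` by a unique walk of length ≤ k -/
lemma reach_of_ne (ho : IsOutlierFn A k o) {u v : V} (h : v ≠ o u) :
    ∃ m ≤ k, ∃ f, Wk A f m u v := by
  rw [← reachIn_iff_wk]
  by_contra hn
  exact h ((ho u v).mp hn)

end WithO

end StmtEleven3

namespace StmtEleven4
open StmtEleven StmtEleven2 StmtEleven3

variable {V : Type*} [Fintype V] {A : V → V → Prop} {d k : ℕ} {o : V ≃ V}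

open Classical in
/-- the out-neighbourhood as a finset -/
noncomputable def Nout (A : V → V → Prop) (u : V) : Finset V :=
  Finset.univ.filter (fun w => A u w)

open Classical in
lemma card_Nout (hdeg : ∀ u : V, Set.ncard {w : V | A u w} = d) (u : V) :
    (Nout A u).card = d := by
  have := hdeg u
  rw [Set.ncard_eq_toFinset_card'] at this
  rw [← this, Nout]
  congr 1
  ext x
  simp

open Classical in
lemma mem_Nout {u w : V} : w ∈ Nout A u ↔ A u w := by
  simp [Nout]

/-- KEY LEMMA: there is no walk of length `1 ≤ a ≤ k-1` from `u` to `o⁻¹ u`. -/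
lemma no_short_outlier_return
    (hd : 2 ≤ d) (hgeo : KGeodetic A k)
    (hdeg : ∀ u : V, Set.ncard {w : V | A u w} = d)
    (ho : IsOutlierFn A k o)
    (hhom : ∀ a b : V, A a b ↔ A (o a) (o b))
    (hvt : ∀ u v : V, ∃ φ : V ≃ V, (∀ a b : V, A a b ↔ A (φ a) (φ b)) ∧ φ u = v)
    (u : V) (a : ℕ) (ha1 : 1 ≤ a) (ha2 : a + 1 ≤ k) :
    ¬ ∃ f, Wk A f a u (o.symm u) := by
  rintro ⟨f, hf⟩
  -- choose an out-neighbour y of u different from f 1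
  have hcard : 1 < (Nout A u).card := by rw [card_Nout hdeg]; omega
  obtain ⟨y, hy, hyne⟩ := Finset.exists_mem_ne hcard (f 1)
  have hAuy : A u y := mem_Nout.mp hy
  -- transport the walk to start at y
  obtain ⟨φ, hφ, hφu⟩ := hvt u y
  have hg : Wk A (φ ∘ f) a y (φ (o.symm u)) := by
    have := wk_map (ψ := φ) (fun a b hab => (hφ a b).mp hab) hf
    rwa [hφu] at this
  have hoy : φ (o.symm u) = o.symm y := by
    rw [← comm_o_symm ho φ hφ u, hφu]
  rw [hoy] at hg
  set g := φ ∘ f with hgdef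
  -- walk 1 : u → y → … → o⁻¹ y  (length a+1)
  have h1 : Wk A (fun i => if i = 0 then u else g (i - 1)) (a + 1) u (o.symm y) := by
    refine ⟨by simp, ?_, ?_⟩
    · simp only [Nat.succ_ne_zero, if_false, Nat.add_sub_cancel]
      exact hg.2.1
    · intro i hi
      match i with
      | 0 =>
          simp only [if_pos rfl, Nat.one_ne_zero, if_false]
          have : g 0 = y := hg.1
          simpa [this] using hAuy
      | Nat.succ j =>
          simp only [Nat.succ_ne_zero, if_false, Nat.succ_sub_one]
          exact hg.2.2 j (by omega)
  -- walk 2 : u → … → o⁻¹ u → o⁻¹ y  (length a+1)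
  have h2 : Wk A (fun i => if i ≤ a then f i else o.symm y) (a + 1) u (o.symm y) := by
    refine ⟨by simp [hf.1], by simp, ?_⟩
    intro i hi
    rcases Nat.lt_or_ge i a with h | h
    · simp only [if_pos (by omega : i ≤ a), if_pos (by omega : i + 1 ≤ a)]
      exact hf.2.2 i h
    · have hia : i = a := by omega
      subst hia
      simp only [if_pos le_rfl, if_neg (by omega : ¬ i + 1 ≤ i)]
      rw [hf.2.1]
      exact (edge_o_symm hhom u y).mp hAuy
  -- geodetic uniqueness forces y = f 1, contradiction
  have hext := uniq_ext hgeo h1 h2 ha2 ha2 1 (by omega)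
  simp only [Nat.one_ne_zero, if_false, if_pos (by omega : 1 ≤ a)] at hext
  have : g 0 = y := hg.1
  rw [show (1:ℕ) - 1 = 0 from rfl, this] at hext
  exact hyne hext

end StmtEleven4

namespace StmtEleven5
open StmtEleven StmtEleven2 StmtEleven3 StmtEleven4

variable {V : Type*} [Fintype V] {A : V → V → Prop} {d k : ℕ} {o : V ≃ V}

lemma wk_prefix {f : ℕ → V} {m : ℕ} {u v : V} (hf : Wk A f m u v) {j : ℕ} (hj : j ≤ m) :
    Wk A f j u (f j) :=
  ⟨hf.1, rfl, fun i hi => hf.2.2 i (by omega)⟩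

lemma wk_suffix {f : ℕ → V} {m : ℕ} {u v : V} (hf : Wk A f m u v) {j : ℕ} (hj : j ≤ m) :
    Wk A (fun i => f (j + i)) (m - j) (f j) v := by
  refine ⟨by simp, ?_, ?_⟩
  · have : j + (m - j) = m := by omega
    simp only [this]; exact hf.2.1
  · intro i hi
    have : j + (i + 1) = j + i + 1 := by omega
    simp only [this]
    exact hf.2.2 (j + i) (by omega)

lemma wk_extend {f : ℕ → V} {a : ℕ} {u p v : V} (hf : Wk A f a u p) (hA : A p v) :
    Wk A (fun i => if i ≤ a then f i else v) (a + 1) u v := by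
  refine ⟨by simp [hf.1], by simp, ?_⟩
  intro i hi
  rcases Nat.lt_or_ge i a with h | h
  · simp only [if_pos (by omega : i ≤ a), if_pos (by omega : i + 1 ≤ a)]
    exact hf.2.2 i h
  · have hia : i = a := by omega
    subst hia
    simp only [if_pos le_rfl, if_neg (by omega : ¬ i + 1 ≤ i)]
    rw [hf.2.1]
    exact hA

open Classical in
noncomputable def S (A : V → V → Prop) (a : ℕ) (u : V) : Finset V :=
  Finset.univ.filter (fun v => ∃ f, Wk A f a u v)

open Classical in
lemma mem_S {a : ℕ} {u v : V} : v ∈ S A a u ↔ ∃ f, Wk A f a u v := by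
  simp [S]

lemma card_S (hgeo : KGeodetic A k)
    (hdeg : ∀ u : V, Set.ncard {w : V | A u w} = d) (u : V) :
    ∀ a, a ≤ k → (S A a u).card = d ^ a := by
  classical
  intro a
  induction a with
  | zero =>
      intro _
      have : S A 0 u = {u} := by
        ext v
        rw [mem_S, Finset.mem_singleton]
        constructor
        · rintro ⟨f, hf⟩; rw [← hf.2.1, ← hf.1]
        · intro h; exact ⟨fun _ => u, rfl, h.symm, by omega⟩
      rw [this]; simp
  | succ a ih =>
      intro hak
      have hS : S A (a+1) u = (S A a u).biUnion (fun p => Nout A p) := by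
        ext v
        rw [mem_S, Finset.mem_biUnion]
        constructor
        · rintro ⟨f, hf⟩
          exact ⟨f a, mem_S.mpr ⟨f, wk_prefix hf (by omega)⟩,
            mem_Nout.mpr (by have := hf.2.2 a (by omega); rwa [hf.2.1] at this)⟩
        · rintro ⟨p, hp, hv⟩
          obtain ⟨f, hf⟩ := mem_S.mp hp
          exact ⟨_, wk_extend hf (mem_Nout.mp hv)⟩
      rw [hS, Finset.card_biUnion, Finset.sum_congr rfl (fun p _ => card_Nout hdeg p)]
      · rw [Finset.sum_const, smul_eq_mul, ih (by omega)]
        ring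
      · -- disjointness
        intro p hp q hq hpq
        rw [Function.onFun, Finset.disjoint_left]
        intro x hxp hxq
        obtain ⟨f, hf⟩ := mem_S.mp hp
        obtain ⟨g, hg⟩ := mem_S.mp hq
        have h1 := wk_extend hf (mem_Nout.mp hxp)
        have h2 := wk_extend hg (mem_Nout.mp hxq)
        have := uniq_ext hgeo h1 h2 (by omega) (by omega) a (by omega)
        simp only [if_pos le_rfl] at this
        rw [hf.2.1, hg.2.1] at this
        exact hpq this

/-- membership in `S` for two values `≤ k` forces the values equal -/
lemma S_length_unique (hgeo : KGeodetic A k) {a b : ℕ} {u v : V}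
    (ha : a ≤ k) (hb : b ≤ k) (hva : v ∈ S A a u) (hvb : v ∈ S A b u) : a = b := by
  obtain ⟨f, hf⟩ := mem_S.mp hva
  obtain ⟨g, hg⟩ := mem_S.mp hvb
  exact uniq_len hgeo hf hg ha hb

end StmtEleven5

namespace StmtEleven6
open StmtEleven StmtEleven2 StmtEleven3 StmtEleven4 StmtEleven5

variable {V : Type*} [Fintype V] {A : V → V → Prop} {d k : ℕ} {o : V ≃ V}

lemma wk_cons {p v u : V} {h : ℕ → V} {m : ℕ} (hA : A p v) (hh : Wk A h m v u) :
    Wk A (fun i => if i = 0 then p else h (i - 1)) (m + 1) p u := by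
  refine ⟨by simp, by simp [hh.2.1], ?_⟩
  intro i hi
  match i with
  | 0 =>
      simp only [if_pos rfl, Nat.one_ne_zero, if_false]
      simpa [hh.1] using hA
  | Nat.succ j =>
      simp only [Nat.succ_ne_zero, if_false, Nat.succ_sub_one]
      exact hh.2.2 j (by omega)

open Classical in
noncomputable def B (A : V → V → Prop) (k t : ℕ) (u : V) : Finset V :=
  (S A t u).filter (fun v => ∃ m, m + 1 ≤ k ∧ ∃ g : ℕ → V, Wk A g m v u)

open Classical in
lemma mem_B {t : ℕ} {u v : V} :
    v ∈ B A k t u ↔ v ∈ S A t u ∧ ∃ m, m + 1 ≤ k ∧ ∃ g : ℕ → V, Wk A g m v u := by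
  simp [B]

open Classical in
/-- the (unique) short return walk from `p` to `u`, as a (length, function) pair -/
noncomputable def retw (A : V → V → Prop) (k : ℕ) (p u : V) : ℕ × (ℕ → V) :=
  if h : ∃ q : ℕ × (ℕ → V), q.1 ≤ k ∧ Wk A q.2 q.1 p u then Classical.choose h
  else (0, fun _ => p)

lemma retw_spec {p u : V} (h : ∃ m ≤ k, ∃ g : ℕ → V, Wk A g m p u) :
    (retw A k p u).1 ≤ k ∧ Wk A (retw A k p u).2 (retw A k p u).1 p u := by
  obtain ⟨m, hm, g, hg⟩ := h
  have h' : ∃ q : ℕ × (ℕ → V), q.1 ≤ k ∧ Wk A q.2 q.1 p u := ⟨(m, g), hm, hg⟩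
  rw [retw, dif_pos h']
  exact Classical.choose_spec h'

section CardB

/-- for `p ∈ S (t-1) u` a return walk exists and has length ≥ 1 -/
lemma ret_exists (hgeo : KGeodetic A k)
    (hdeg : ∀ u : V, Set.ncard {w : V | A u w} = d)
    (ho : IsOutlierFn A k o) (hd : 2 ≤ d)
    (hhom : ∀ a b : V, A a b ↔ A (o a) (o b))
    (hvt : ∀ u v : V, ∃ φ : V ≃ V, (∀ a b : V, A a b ↔ A (φ a) (φ b)) ∧ φ u = v)
    {t : ℕ} (ht2 : 2 ≤ t) (htk : t + 1 ≤ k) {u p : V} (hp : p ∈ S A (t-1) u) :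
    (∃ m ≤ k, ∃ g : ℕ → V, Wk A g m p u) ∧
      1 ≤ (retw A k p u).1 ∧ (retw A k p u).1 ≤ k ∧
      Wk A (retw A k p u).2 (retw A k p u).1 p u := by
  obtain ⟨f, hf⟩ := mem_S.mp hp
  have hpne : u ≠ o p := by
    intro h
    have hps : p = o.symm u := by rw [h]; simp
    rw [hps] at hf
    exact no_short_outlier_return hd hgeo hdeg ho hhom hvt u (t-1)
      (by omega) (by omega) ⟨f, hf⟩
  have hex : ∃ m ≤ k, ∃ g : ℕ → V, Wk A g m p u := reach_of_ne ho hpne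
  obtain ⟨hk1, hwk⟩ := retw_spec hex
  refine ⟨hex, ?_, hk1, hwk⟩
  -- length ≥ 1 : otherwise p = u giving a short closed walk
  by_contra hlt
  have h0 : (retw A k p u).1 = 0 := by omega
  have hpu : p = u := by
    have := hwk.1
    have h2 := hwk.2.1
    rw [h0] at h2
    rw [← this, h2]
  rw [hpu] at hf
  exact no_short_closed hgeo hf (by omega) (by omega)

lemma card_B (hgeo : KGeodetic A k)
    (hdeg : ∀ u : V, Set.ncard {w : V | A u w} = d)
    (ho : IsOutlierFn A k o) (hd : 2 ≤ d)
    (hhom : ∀ a b : V, A a b ↔ A (o a) (o b))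
    (hvt : ∀ u v : V, ∃ φ : V ≃ V, (∀ a b : V, A a b ↔ A (φ a) (φ b)) ∧ φ u = v)
    {t : ℕ} (ht2 : 2 ≤ t) (htk : t + 1 ≤ k) (u : V) :
    (B A k t u).card = d ^ (t - 1) := by
  classical
  have ht1 : t - 1 + 1 = t := by omega
  have himg : B A k t u = (S A (t-1) u).image (fun p => (retw A k p u).2 1) := by
    ext v
    constructor
    · intro hv
      obtain ⟨hvS, mv, hmv, gv, hgv⟩ := mem_B.mp hv
      obtain ⟨f, hf⟩ := mem_S.mp hvS
      have hpmem : f (t-1) ∈ S A (t-1) u := mem_S.mpr ⟨f, wk_prefix hf (by omega)⟩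
      rw [Finset.mem_image]
      refine ⟨f (t-1), hpmem, ?_⟩
      -- the chosen return walk from f (t-1) agrees with p → v → u
      obtain ⟨hex, h1m, hmk, hwk⟩ := ret_exists hgeo hdeg ho hd hhom hvt ht2 htk hpmem
      have hAev : A (f (t-1)) v := by
        have := hf.2.2 (t-1) (by omega)
        rwa [ht1, hf.2.1] at this
      have hc := wk_cons hAev hgv
      have hext := uniq_ext hgeo hwk hc hmk (by omega) 1 h1m
      simpa [hgv.1] using hext
    · intro hv
      rw [Finset.mem_image] at hv
      obtain ⟨p, hp, hpv⟩ := hv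
      obtain ⟨hex, h1m, hmk, hwk⟩ := ret_exists hgeo hdeg ho hd hhom hvt ht2 htk hp
      obtain ⟨f, hf⟩ := mem_S.mp hp
      have hAe : A p ((retw A k p u).2 1) := by
        have := hwk.2.2 0 (by omega)
        rwa [hwk.1] at this
      rw [mem_B, ← hpv]
      constructor
      · -- in S t u via the extended walk
        refine mem_S.mpr ?_
        have := wk_extend hf hAe
        rw [ht1] at this
        exact ⟨_, this⟩
      · -- return walk : the suffix of the chosen walk
        have := wk_suffix hwk h1m
        exact ⟨(retw A k p u).1 - 1, by omega, _, this⟩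
  rw [himg, Finset.card_image_of_injOn, card_S hgeo hdeg u (t-1) (by omega)]
  -- injectivity
  intro p hp q hq hpq
  simp only at hpq
  obtain ⟨hexp, h1p, hkp, hwp⟩ := ret_exists hgeo hdeg ho hd hhom hvt ht2 htk hp
  obtain ⟨hexq, h1q, hkq, hwq⟩ := ret_exists hgeo hdeg ho hd hhom hvt ht2 htk hq
  obtain ⟨f, hf⟩ := mem_S.mp hp
  obtain ⟨g, hg⟩ := mem_S.mp hq
  have hAp : A p ((retw A k p u).2 1) := by
    have := hwp.2.2 0 (by omega); rwa [hwp.1] at this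
  have hAq : A q ((retw A k q u).2 1) := by
    have := hwq.2.2 0 (by omega); rwa [hwq.1] at this
  rw [hpq] at hAp
  have e1 := wk_extend hf hAp
  have e2 := wk_extend hg hAq
  have hext := uniq_ext hgeo e1 e2 (by omega) (by omega) (t-1) (by omega)
  simp only [if_pos le_rfl] at hext
  rw [hf.2.1, hg.2.1] at hext
  exact hext

end CardB

end StmtEleven6

namespace StmtEleven7
open StmtEleven StmtEleven2 StmtEleven3 StmtEleven4 StmtEleven5 StmtEleven6

variable {V : Type*} [Fintype V] {A : V → V → Prop} {d k : ℕ}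

open Classical in
noncomputable def C (A : V → V → Prop) (n : ℕ) [NeZero n] : Finset (ZMod n → V) :=
  Finset.univ.filter (fun f => ∀ z : ZMod n, A (f z) (f (z + 1)))

open Classical in
lemma mem_C {n : ℕ} [NeZero n] {f : ZMod n → V} :
    f ∈ C A n ↔ ∀ z : ZMod n, A (f z) (f (z + 1)) := by
  simp [C]

def rot {n : ℕ} (c : ZMod n) (f : ZMod n → V) : ZMod n → V := fun z => f (z + c)

lemma rot_zero {n : ℕ} (f : ZMod n → V) : rot (0 : ZMod n) f = f := by
  funext z; simp [rot]

lemma rot_rot {n : ℕ} (c c' : ZMod n) (f : ZMod n → V) :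
    rot c (rot c' f) = rot (c + c') f := by
  funext z; simp [rot, add_assoc]

lemma rot_mem {n : ℕ} [NeZero n] {f : ZMod n → V} (hf : f ∈ C A n) (c : ZMod n) :
    rot c f ∈ C A n := by
  rw [mem_C] at hf ⊢
  intro z
  have := hf (z + c)
  simpa [rot, add_right_comm] using this

/-- periodic cyclic walk gives a short closed walk : freeness of the rotation -/
lemma rot_free (hgeo : KGeodetic A k) {n : ℕ} [NeZero n] (hn : n ≤ 2 * k + 1)
    {f : ZMod n → V} (hf : f ∈ C A n) {c : ZMod n} (hc : rot c f = f) : c = 0 := by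
  by_contra hc0
  -- replace c by c or -c so that the value is between 1 and k
  have hcv : (c.val ≠ 0) := fun h => hc0 ((ZMod.val_eq_zero c).mp h)
  have hcvlt : c.val < n := ZMod.val_lt c
  have key : ∀ c' : ZMod n, rot c' f = f → 1 ≤ c'.val → c'.val ≤ k → False := by
    intro c' hrot h1 h2
    have hper : ∀ z : ZMod n, f (z + c') = f z := fun z => congrFun hrot z
    have hwk : Wk A (fun i : ℕ => f (i : ZMod n)) c'.val (f 0) (f 0) := by
      refine ⟨by simp, ?_, ?_⟩
      · show f ((c'.val : ℕ) : ZMod n) = f 0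
        have : ((c'.val : ℕ) : ZMod n) = c' := by
          rw [ZMod.natCast_val, ZMod.cast_id]
        rw [this]
        have := hper 0
        simpa using this
      · intro i hi
        have := mem_C.mp hf (i : ZMod n)
        show A (f (i : ZMod n)) (f ((i+1 : ℕ) : ZMod n))
        rwa [Nat.cast_add, Nat.cast_one]
    exact no_short_closed hgeo hwk h1 h2
  rcases Nat.lt_or_ge c.val (k + 1) with h | h
  · exact key c hc (by omega) (by omega)
  · -- use -c
    have hneg : rot (-c) f = f := by
      have := congrArg (rot (-c)) hc
      rw [rot_rot, neg_add_cancel, rot_zero] at this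
      exact this.symm
    have hnv : (-c).val = n - c.val := by
      rw [ZMod.neg_val, if_neg hc0]
    exact key (-c) hneg (by omega) (by omega)

open Classical in
lemma dvd_card_C (hgeo : KGeodetic A k) (n : ℕ) [NeZero n] (hn : n ≤ 2 * k + 1) :
    n ∣ (C A n).card := by
  classical
  set X := {f : ZMod n → V // f ∈ C A n} with hX
  letI s : Setoid X :=
    ⟨fun x y => ∃ c : ZMod n, rot c x.val = y.val,
     fun x => ⟨0, rot_zero x.val⟩,
     by rintro x y ⟨c, hc⟩
        exact ⟨-c, by rw [← hc, rot_rot, neg_add_cancel, rot_zero]⟩,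
     by rintro x y z ⟨c, hc⟩ ⟨c', hc'⟩
        exact ⟨c' + c, by rw [← hc', ← hc, rot_rot]⟩⟩
  have hcard1 : (C A n).card = Fintype.card X := (Fintype.card_coe _).symm
  have hcard2 : Fintype.card X = ∑ q : Quotient s, Fintype.card {x : X // ⟦x⟧ = q} := by
    rw [← Fintype.card_sigma]
    exact Fintype.card_congr (Equiv.sigmaFiberEquiv (fun x : X => ⟦x⟧)).symm
  have hfib : ∀ q : Quotient s, Fintype.card {x : X // ⟦x⟧ = q} = n := by
    intro q
    have hmem : ∀ c : ZMod n, rot c q.out.val ∈ C A n :=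
      fun c => rot_mem q.out.property c
    have hbij : Function.Bijective
        (fun c : ZMod n => (⟨⟨rot c q.out.val, hmem c⟩, by
          have : (⟨rot c q.out.val, hmem c⟩ : X) ≈ q.out := ⟨-c, by
            rw [rot_rot, neg_add_cancel, rot_zero]⟩
          rw [Quotient.sound this, Quotient.out_eq]⟩ :
          {x : X // ⟦x⟧ = q})) := by
      constructor
      · intro c c' hcc
        have h1 : rot c q.out.val = rot c' q.out.val := by
          have := congrArg (fun y => y.val.val) hcc
          simpa using this
        have h2 : rot (-c' + c) q.out.val = q.out.val := by
          have h3 := congrArg (rot (-c')) h1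
          rw [rot_rot, rot_rot, neg_add_cancel, rot_zero] at h3
          exact h3
        have h4 := rot_free hgeo hn q.out.property h2
        exact (neg_add_eq_zero.mp h4).symm
      · rintro ⟨x, hx⟩
        have : x ≈ q.out := by
          apply Quotient.exact
          rw [hx, Quotient.out_eq]
        obtain ⟨c, hc⟩ := this
        refine ⟨-c, ?_⟩
        apply Subtype.ext
        apply Subtype.ext
        show rot (-c) q.out.val = x.val
        rw [← hc, rot_rot, add_comm, add_neg_cancel, rot_zero]
    calc Fintype.card {x : X // ⟦x⟧ = q} = Fintype.card (ZMod n) :=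
          (Fintype.card_congr (Equiv.ofBijective _ hbij)).symm
      _ = n := ZMod.card n
  rw [hcard1, hcard2]
  rw [Finset.sum_congr rfl (fun q _ => hfib q), Finset.sum_const, smul_eq_mul]
  exact dvd_mul_left n _

end StmtEleven7

namespace StmtEleven8
open StmtEleven StmtEleven2 StmtEleven3 StmtEleven4 StmtEleven5 StmtEleven6 StmtEleven7

variable {V : Type*} [Fintype V] {A : V → V → Prop} {d k : ℕ} {o : V ≃ V}

/-- unrolling a cyclic walk into a linear walk -/
lemma unroll {n : ℕ} [NeZero n] {f : ZMod n → V} (hf : f ∈ C A n) (m : ℕ) :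
    Wk A (fun i : ℕ => f (i : ZMod n)) m (f 0) (f (m : ZMod n)) := by
  refine ⟨by simp, rfl, ?_⟩
  intro i _
  have := mem_C.mp hf (i : ZMod n)
  show A (f (i : ZMod n)) (f ((i+1 : ℕ) : ZMod n))
  rwa [Nat.cast_add, Nat.cast_one]

lemma unroll_from {n : ℕ} [NeZero n] {f : ZMod n → V} (hf : f ∈ C A n)
    (z : ZMod n) (m : ℕ) :
    Wk A (fun i : ℕ => f (z + (i : ZMod n))) m (f z) (f (z + (m : ZMod n))) := by
  refine ⟨by simp, rfl, ?_⟩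
  intro i _
  have := mem_C.mp hf (z + (i : ZMod n))
  show A (f (z + (i : ZMod n))) (f (z + ((i+1 : ℕ) : ZMod n)))
  rwa [Nat.cast_add, Nat.cast_one, ← add_assoc]

section Fiber

variable {t : ℕ}

open Classical in
noncomputable def Cfib (A : V → V → Prop) (k t : ℕ) [NeZero (k + t)] (u : V) :
    Finset (ZMod (k + t) → V) :=
  (C A (k + t)).filter (fun f => f 0 = u)

open Classical in
lemma mem_Cfib [NeZero (k + t)] {u : V} {f : ZMod (k + t) → V} :
    f ∈ Cfib A k t u ↔ f ∈ C A (k + t) ∧ f 0 = u := by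
  simp [Cfib]

open Classical in
lemma card_Cfib [NeZero (k + t)]
    (hgeo : KGeodetic A k)
    (hdeg : ∀ u : V, Set.ncard {w : V | A u w} = d)
    (ho : IsOutlierFn A k o) (hd : 2 ≤ d)
    (hhom : ∀ a b : V, A a b ↔ A (o a) (o b))
    (hvt : ∀ u v : V, ∃ φ : V ≃ V, (∀ a b : V, A a b ↔ A (φ a) (φ b)) ∧ φ u = v)
    (ht2 : 2 ≤ t) (htk : t + 1 ≤ k) (u : V) :
    (Cfib A k t u).card = ((S A t u) \ (B A k t u)).card := by
  classical
  set n := k + t with hn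
  have htn : t < n := by omega
  have hvt' : ((t : ZMod n)).val = t := ZMod.val_cast_of_lt htn
  apply Finset.card_bij (fun f _ => f (t : ZMod n))
  · -- maps into S \ B
    intro f hf
    obtain ⟨hfC, hf0⟩ := mem_Cfib.mp hf
    have hpre : Wk A (fun i : ℕ => f (i : ZMod n)) t u (f (t : ZMod n)) := by
      have := unroll hfC t
      rwa [hf0] at this
    have hsuf : Wk A (fun i : ℕ => f ((t : ZMod n) + (i : ZMod n))) k
        (f (t : ZMod n)) u := by
      have := unroll_from hfC (t : ZMod n) k
      have he : (t : ZMod n) + (k : ZMod n) = 0 := by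
        rw [← Nat.cast_add]
        have : t + k = n := by omega
        rw [this]
        exact ZMod.natCast_self n
      rwa [he, hf0] at this
    rw [Finset.mem_sdiff]
    constructor
    · exact mem_S.mpr ⟨_, hpre⟩
    · intro hB
      obtain ⟨-, m, hm, g, hg⟩ := mem_B.mp hB
      have := uniq_len hgeo hsuf hg (by omega) (by omega)
      omega
  · -- injective
    intro f hf f' hf' hee
    obtain ⟨hfC, hf0⟩ := mem_Cfib.mp hf
    obtain ⟨hfC', hf0'⟩ := mem_Cfib.mp hf'
    have hpre : Wk A (fun i : ℕ => f (i : ZMod n)) t u (f (t : ZMod n)) := by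
      have := unroll hfC t; rwa [hf0] at this
    have hpre' : Wk A (fun i : ℕ => f' (i : ZMod n)) t u (f' (t : ZMod n)) := by
      have := unroll hfC' t; rwa [hf0'] at this
    rw [← hee] at hpre'
    have hext1 := uniq_ext hgeo hpre hpre' (by omega) (by omega)
    have hsuf : Wk A (fun i : ℕ => f ((t : ZMod n) + (i : ZMod n))) k
        (f (t : ZMod n)) u := by
      have := unroll_from hfC (t : ZMod n) k
      have he : (t : ZMod n) + (k : ZMod n) = 0 := by
        rw [← Nat.cast_add]; have : t + k = n := by omega
        rw [this]; exact ZMod.natCast_self n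
      rwa [he, hf0] at this
    have hsuf' : Wk A (fun i : ℕ => f' ((t : ZMod n) + (i : ZMod n))) k
        (f' (t : ZMod n)) u := by
      have := unroll_from hfC' (t : ZMod n) k
      have he : (t : ZMod n) + (k : ZMod n) = 0 := by
        rw [← Nat.cast_add]; have : t + k = n := by omega
        rw [this]; exact ZMod.natCast_self n
      rwa [he, hf0'] at this
    rw [← hee] at hsuf'
    have hext2 := uniq_ext hgeo hsuf hsuf' (le_refl k) (le_refl k)
    funext z
    have hz : ((z.val : ℕ) : ZMod n) = z := by rw [ZMod.natCast_val, ZMod.cast_id]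
    have hzlt : z.val < n := ZMod.val_lt z
    rcases le_or_gt z.val t with h | h
    · have := hext1 z.val h
      simpa [hz] using this
    · have hj : z.val = t + (z.val - t) := by omega
      have hjk : z.val - t ≤ k := by omega
      have h2 := hext2 (z.val - t) hjk
      have h3 : (t : ZMod n) + ((z.val - t : ℕ) : ZMod n) = z := by
        rw [← Nat.cast_add, ← hj, hz]
      rw [h3] at h2
      exact h2
  · -- surjective
    intro v hv
    rw [Finset.mem_sdiff] at hv
    obtain ⟨hvS, hvB⟩ := hv
    obtain ⟨fP, hfP⟩ := mem_S.mp hvS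
    -- return walk of length exactly k
    have hne : u ≠ o v := by
      intro h
      have hvs : v = o.symm u := by rw [h]; simp
      rw [hvs] at hfP
      exact no_short_outlier_return hd hgeo hdeg ho hhom hvt u t (by omega)
        (by omega) ⟨fP, hfP⟩
    obtain ⟨m, hm, Q, hQ⟩ := reach_of_ne ho hne
    have hmk : m = k := by
      rcases Nat.lt_or_ge m k with h | h
      · exfalso
        exact hvB (mem_B.mpr ⟨hvS, m, by omega, Q, hQ⟩)
      · omega
    rw [hmk] at hQ
    -- glue the two walks into a cyclic walk
    set F : ℕ → V := fun j => if j ≤ t then fP j else Q (j - t) with hF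
    have hFadj : ∀ j < n, A (F j) (F (j + 1)) := by
      intro j hj
      rcases Nat.lt_or_ge j t with h | h
      · simp only [hF, if_pos (by omega : j ≤ t), if_pos (by omega : j + 1 ≤ t)]
        exact hfP.2.2 j h
      · rcases Nat.eq_or_lt_of_le h with h' | h'
        · have hjt : j = t := h'.symm
          subst hjt
          simp only [hF, if_pos le_rfl, if_neg (by omega : ¬ j + 1 ≤ j)]
          have h4 : j + 1 - j = 1 := by omega
          rw [h4, hfP.2.1]
          have := hQ.2.2 0 (by omega)
          rwa [hQ.1] at this
        · simp only [hF, if_neg (by omega : ¬ j ≤ t), if_neg (by omega : ¬ j + 1 ≤ t)]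
          have : j + 1 - t = (j - t) + 1 := by omega
          rw [this]
          exact hQ.2.2 (j - t) (by omega)
    have hFn : F n = F 0 := by
      simp only [hF, if_neg (by omega : ¬ n ≤ t), if_pos (by omega : 0 ≤ t)]
      have : n - t = k := by omega
      rw [this, hQ.2.1, hfP.1]
    refine ⟨fun z => F z.val, ?_, ?_⟩
    · rw [mem_Cfib]
      constructor
      · rw [mem_C]
        intro z
        have hzlt : z.val < n := ZMod.val_lt z
        have hzv : (z + 1).val = if z.val = n - 1 then 0 else z.val + 1 := by
          rcases Nat.eq_or_lt_of_le (by omega : z.val ≤ n - 1) with h | h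
          · rw [if_pos h]
            have : z = ((n-1 : ℕ) : ZMod n) := by
              rw [← h, ZMod.natCast_val, ZMod.cast_id]
            have h3 : ((n-1+1 : ℕ) : ZMod n) = ((n-1:ℕ) : ZMod n) + 1 := by
              rw [Nat.cast_add, Nat.cast_one]
            have h2 : n - 1 + 1 = n := by omega
            rw [this, ← h3, h2, ZMod.natCast_self, ZMod.val_zero]
          · rw [if_neg (by omega)]
            have : z + 1 = ((z.val + 1 : ℕ) : ZMod n) := by
              rw [Nat.cast_add, Nat.cast_one, ZMod.natCast_val, ZMod.cast_id]
            rw [this, ZMod.val_cast_of_lt (by omega)]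
        rcases Nat.eq_or_lt_of_le (by omega : z.val ≤ n - 1) with h | h
        · rw [hzv, if_pos h, h, ← hFn]
          have := hFadj (n-1) (by omega)
          have h2 : n - 1 + 1 = n := by omega
          rwa [h2] at this
        · rw [hzv, if_neg (by omega)]
          exact hFadj z.val (by omega)
      · show F (0 : ZMod n).val = u
        rw [ZMod.val_zero]
        simp only [hF, if_pos (by omega : 0 ≤ t)]
        exact hfP.1
    · show F ((t : ZMod n)).val = v
      rw [hvt']
      simp only [hF, if_pos le_rfl]
      exact hfP.2.1

end Fiber

end StmtEleven8


/-- If `G` is a vertex-transitive `(d,k;+1)`-digraph, then for `2 ≤ t ≤ k-1`,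
`(k+t)` divides `(M(d,k)+1)·(d^t − d^(t-1))`. -/
theorem stmt_11 {V : Type*} [Fintype V] (A : V → V → Prop) (d k : ℕ)
    (hd : 2 ≤ d) (hk : 2 ≤ k)
    (hgeo : KGeodetic A k)
    (hdeg : ∀ u : V, Set.ncard {w : V | A u w} = d)
    (hcard : Fintype.card V = mooreBound d k + 1)
    (o : V ≃ V) (ho : IsOutlierFn A k o)
    (hhom : ∀ a b : V, A a b ↔ A (o a) (o b))
    (hvt : ∀ u v : V, ∃ φ : V ≃ V, (∀ a b : V, A a b ↔ A (φ a) (φ b)) ∧ φ u = v) :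
    ∀ t : ℕ, 2 ≤ t → t ≤ k - 1 →
      (k + t) ∣ (mooreBound d k + 1) * (d ^ t - d ^ (t - 1)) := by

  classical
  intro t ht2 htk'
  have htk : t + 1 ≤ k := by omega
  haveI : NeZero (k + t) := ⟨by omega⟩
  have hsplit : (StmtEleven7.C A (k+t)).card = ∑ u : V, (StmtEleven8.Cfib A k t u).card := by
    rw [Finset.card_eq_sum_card_fiberwise
      (f := fun f : ZMod (k+t) → V => f 0) (t := Finset.univ)
      (fun x _ => Finset.mem_univ _)]
    apply Finset.sum_congr rfl
    intro u _
    congr 1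
  have hfib : ∀ u : V, (StmtEleven8.Cfib A k t u).card = d ^ t - d ^ (t-1) := by
    intro u
    have hBS : StmtEleven6.B A k t u ⊆ StmtEleven5.S A t u := fun v hv => (StmtEleven6.mem_B.mp hv).1
    rw [StmtEleven8.card_Cfib hgeo hdeg ho hd hhom hvt ht2 htk u,
      Finset.card_sdiff_of_subset hBS,
      StmtEleven5.card_S hgeo hdeg u t (by omega),
      StmtEleven6.card_B hgeo hdeg ho hd hhom hvt ht2 htk u]
  have htot : (StmtEleven7.C A (k+t)).card = (Fintype.card V) * (d ^ t - d ^ (t-1)) := by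
    rw [hsplit, Finset.sum_congr rfl (fun u _ => hfib u), Finset.sum_const,
      smul_eq_mul, Finset.card_univ]
  have hdvd := StmtEleven7.dvd_card_C hgeo (k+t) (by omega)
  rw [htot, hcard] at hdvd
  exact hdvd
end

section
/- Let G be a k-geodetic digraph, φ an automorphism of G, and u, v vertices fixed by φ. If P is a directed path of length at most k from u to v, then every vertex of P is fixed by φ. -/

lemma IsWalk.map {V : Type*} {A : V → V → Prop} (φ : V → V)
    (hφ : ∀ a b : V, A a b → A (φ a) (φ b)) :
    ∀ w : List V, IsWalk A w → IsWalk A (w.map φ)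
  | [], h => h.elim
  | [_], _ => trivial
  | a :: b :: l, h => ⟨hφ a b h.1, IsWalk.map φ hφ (b :: l) h.2⟩

lemma map_eq_self_fix {V : Type*} (φ : V → V) :
    ∀ w : List V, w.map φ = w → ∀ x ∈ w, φ x = x
  | [], _, x, hx => absurd hx (List.not_mem_nil (a := x))
  | a :: l, h, x, hx => by
    rw [List.map_cons, List.cons.injEq] at h
    rcases List.mem_cons.1 hx with rfl | hx
    · exact h.1
    · exact map_eq_self_fix φ l h.2 x hx

/-- In a `k`-geodetic digraph, if an automorphism `φ` fixes the endpoints of a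
directed path `P` of length at most `k`, then `φ` fixes every vertex of `P`. -/
theorem stmt_13 {V : Type*} (A : V → V → Prop) (k : ℕ) (hgeo : KGeodetic A k)
    (φ : V ≃ V) (hφ : ∀ a b : V, A a b ↔ A (φ a) (φ b))
    (u v : V) (hu : φ u = u) (hv : φ v = v)
    (P : List V) (hP : WalkFrom A u v P) (hlen : P.length ≤ k + 1) :
    ∀ x ∈ P, φ x = x := by
  have hmap : WalkFrom A u v (P.map φ) := by
    obtain ⟨hw, hh, hl⟩ := hP
    refine ⟨IsWalk.map φ (fun a b hab => (hφ a b).1 hab) P hw, ?_, ?_⟩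
    · rw [List.head?_map, hh, Option.map_some, hu]
    · rw [List.getLast?_map, hl, Option.map_some, hv]
  have := hgeo u v (P.map φ) P hmap hP (by simpa using hlen) hlen
  exact map_eq_self_fix φ P this
end
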